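/- For every natural number Δ ≥ 1 and every real σ with 0 < σ ≤ 1, there exists a finite simple graph G with maximum degree exactly Δ such that G is σ-sparse and the chromatic number of G is at least ⌊√(1−σ)·Δ⌋. -/

import Mathlib

open Finset

/-- The maximum degree of a finite simple graph (defined using classical decidability). -/
noncomputable def maxDeg {V : Type} [Fintype V] (G : SimpleGraph V) : ℕ := by
  classical exact G.maxDegree

/-- Twice the number of edges of the subgraph of `G` induced by the neighbourhood of `v`
(each edge counted once as an ordered pair in each direction). -/
noncomputable def nbhdPairs {V : Type} [Fintype V] (G : SimpleGraph V) (v : V) : ℕ := by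
  classical exact ((G.neighborFinset v ×ˢ G.neighborFinset v).filter fun p => G.Adj p.1 p.2).card

/-- clique on first coords with second coord 0, plus pendant vertices -/
def cpG (K t : ℕ) (ht : 0 < t) : SimpleGraph (Fin K × Fin t) where
  Adj a b := a ≠ b ∧ (a.2 = ⟨0, ht⟩ ∨ b.2 = ⟨0, ht⟩) ∧
      (a.1 = b.1 ∨ (a.2 = ⟨0, ht⟩ ∧ b.2 = ⟨0, ht⟩))
  symm := by
    refine ⟨?_⟩; rintro a b ⟨h1, h2, h3⟩
    refine ⟨h1.symm, h2.symm, ?_⟩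
    rcases h3 with h | h
    · exact Or.inl h.symm
    · exact Or.inr ⟨h.2, h.1⟩
  loopless := ⟨fun a => by simp⟩

lemma cpG_nbhd_clique {K t : ℕ} (ht : 0 < t) (i : Fin K) [DecidableEq (Fin K × Fin t)]
    [Fintype ((cpG K t ht).neighborSet (i, ⟨0, ht⟩))] :
    (cpG K t ht).neighborFinset (i, ⟨0, ht⟩) =
      ((univ ×ˢ {(⟨0, ht⟩ : Fin t)}).erase (i, ⟨0, ht⟩)) ∪
        ({i} ×ˢ (univ.erase (⟨0, ht⟩ : Fin t))) := by
  ext b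
  rw [SimpleGraph.mem_neighborFinset]; simp only [SimpleGraph.mem_neighborFinset, cpG, mem_union, mem_erase, mem_product,
    mem_univ, mem_singleton, true_and, and_true]
  constructor
  · rintro ⟨h1, -, h3⟩
    by_cases hb : b.2 = ⟨0, ht⟩
    · exact Or.inl ⟨fun hh => h1 hh.symm, hb⟩
    · rcases h3 with h | h
      · exact Or.inr ⟨h.symm, hb⟩
      · exact absurd h hb
  · rintro (⟨h1, h2⟩ | ⟨h1, h2⟩)
    · exact ⟨fun hh => h1 hh.symm, Or.inl trivial, Or.inr h2⟩
    · refine ⟨?_, Or.inl trivial, Or.inl h1.symm⟩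
      intro hh; exact h2 (by rw [← hh])

lemma cpG_nbhd_pendant {K t : ℕ} (ht : 0 < t) (v : Fin K × Fin t)
    (hv : v.2 ≠ ⟨0, ht⟩) [DecidableEq (Fin K × Fin t)]
    [Fintype ((cpG K t ht).neighborSet v)] :
    (cpG K t ht).neighborFinset v = {(v.1, (⟨0, ht⟩ : Fin t))} := by
  ext b
  rw [SimpleGraph.mem_neighborFinset]; simp only [SimpleGraph.mem_neighborFinset, cpG, mem_singleton]
  constructor
  · rintro ⟨h1, h2, h3⟩
    have hb2 : b.2 = ⟨0, ht⟩ := h2.resolve_left hv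
    have hb1 : v.1 = b.1 := by
      rcases h3 with h | h
      · exact h
      · exact absurd h.1 hv
    exact Prod.ext hb1.symm hb2
  · rintro rfl
    refine ⟨?_, Or.inr rfl, Or.inl rfl⟩
    intro hh
    exact hv (congrArg Prod.snd hh)

lemma cpG_degree_clique {K t : ℕ} (ht : 0 < t) (i : Fin K)
    [Fintype ((cpG K t ht).neighborSet (i, ⟨0, ht⟩))] :
    (cpG K t ht).degree (i, ⟨0, ht⟩) = (K - 1) + (t - 1) := by
  classical
  rw [← SimpleGraph.card_neighborFinset_eq_degree, cpG_nbhd_clique ht i]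
  rw [Finset.card_union_of_disjoint]
  · congr 1
    · rw [Finset.card_erase_of_mem (by simp), Finset.card_product]
      simp
    · rw [Finset.card_product, Finset.card_erase_of_mem (mem_univ _)]
      simp
  · rw [Finset.disjoint_left]
    rintro ⟨a1, a2⟩ h1 h2
    simp only [mem_erase, mem_product, mem_univ, mem_singleton, true_and, and_true] at h1 h2
    exact h2.2 h1.2

lemma cpG_degree_pendant {K t : ℕ} (ht : 0 < t) (v : Fin K × Fin t)
    (hv : v.2 ≠ ⟨0, ht⟩) [Fintype ((cpG K t ht).neighborSet v)] :
    (cpG K t ht).degree v = 1 := by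
  classical
  rw [← SimpleGraph.card_neighborFinset_eq_degree, cpG_nbhd_pendant ht v hv]
  simp

lemma cpG_pairs {K t : ℕ} (ht : 0 < t) (v : Fin K × Fin t) :
    nbhdPairs (cpG K t ht) v ≤ (K - 1) * (K - 1) := by
  classical
  unfold nbhdPairs
  by_cases hv : v.2 = ⟨0, ht⟩
  · obtain ⟨v1, v2⟩ := v
    simp only at hv
    subst hv
    set z : Fin t := ⟨0, ht⟩ with hz
    set T : Finset (Fin K × Fin t) := (univ ×ˢ {z}).erase (v1, z) with hT
    have key : ∀ a b : Fin K × Fin t, (cpG K t ht).Adj (v1, z) a →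
        (cpG K t ht).Adj (v1, z) b → (cpG K t ht).Adj a b → a ∈ T := by
      rintro a b ⟨hne, h2, h3⟩ hvb ⟨hne', h2', h3'⟩
      simp only [hT, mem_erase, mem_product, mem_univ, mem_singleton, true_and, and_true]
      refine ⟨fun hh => hne hh.symm, ?_⟩
      by_contra haz
      have hb2 : b.2 = z := h2'.resolve_left haz
      have hb1 : a.1 = b.1 := by
        rcases h3' with h | h
        · exact h
        · exact absurd h.1 haz
      have ha1 : v1 = a.1 := by
        rcases h3 with h | h
        · exact h
        · exact absurd h.2 haz
      have : b = (v1, z) := Prod.ext (ha1.trans hb1).symm hb2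
      exact hvb.ne' this
    calc ((((cpG K t ht).neighborFinset (v1, z) ×ˢ (cpG K t ht).neighborFinset (v1, z)).filter
            fun p => (cpG K t ht).Adj p.1 p.2)).card
        ≤ (T ×ˢ T).card := by
          apply Finset.card_le_card
          rintro ⟨a, b⟩ hp
          simp only [mem_filter, mem_product, SimpleGraph.mem_neighborFinset] at hp
          obtain ⟨⟨ha, hb⟩, hadj⟩ := hp
          simp only [mem_product]
          exact ⟨key a b ha hb hadj, key b a hb ha hadj.symm⟩
      _ = (K - 1) * (K - 1) := by
          rw [Finset.card_product]
          have : T.card = K - 1 := by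
            rw [hT, Finset.card_erase_of_mem (by simp), Finset.card_product]
            simp
          rw [this]
  · have hempty : (((cpG K t ht).neighborFinset v ×ˢ (cpG K t ht).neighborFinset v).filter
        fun p => (cpG K t ht).Adj p.1 p.2) = ∅ := by
      apply Finset.eq_empty_of_forall_notMem
      rintro ⟨a, b⟩ hp
      simp only [mem_filter, mem_product, SimpleGraph.mem_neighborFinset] at hp
      obtain ⟨⟨ha, hb⟩, hadj⟩ := hp
      have hform : ∀ c : Fin K × Fin t, (cpG K t ht).Adj v c → c = (v.1, ⟨0, ht⟩) := by
        rintro c ⟨hne, h2, h3⟩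
        have hc2 : c.2 = ⟨0, ht⟩ := h2.resolve_left hv
        have hc1 : v.1 = c.1 := by
          rcases h3 with h | h
          · exact h
          · exact absurd h.1 hv
        exact Prod.ext hc1.symm hc2
      exact hadj.ne ((hform a ha).trans (hform b hb).symm)
    rw [hempty]
    simp

/-- The clique part gives an embedding of the complete graph. -/
def cpG_top_embedding {K t : ℕ} (ht : 0 < t) :
    (⊤ : SimpleGraph (Fin K)) ↪g cpG K t ht where
  toFun i := (i, ⟨0, ht⟩)
  inj' := fun a b h => (Prod.ext_iff.mp h).1
  map_rel_iff' := by
    intro a b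
    simp only [Function.Embedding.coeFn_mk, SimpleGraph.top_adj, cpG]
    constructor
    · rintro ⟨h1, -, -⟩
      exact fun hh => h1 (by rw [hh])
    · intro h
      exact ⟨fun hh => h (congrArg Prod.fst hh), Or.inl rfl, Or.inr ⟨rfl, rfl⟩⟩

lemma comap_degree {V W : Type} [Fintype V] [Fintype W] (H : SimpleGraph W) (e : V ≃ W) (x : V)
    [Fintype ((H.comap e.toEmbedding).neighborSet x)] [Fintype (H.neighborSet (e x))] :
    (H.comap e.toEmbedding).degree x = H.degree (e x) := by
  rw [← SimpleGraph.card_neighborFinset_eq_degree, ← SimpleGraph.card_neighborFinset_eq_degree]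
  apply Finset.card_equiv e
  intro b
  simp [SimpleGraph.mem_neighborFinset]

lemma comap_pairs {V W : Type} [Fintype V] [Fintype W] (H : SimpleGraph W) (e : V ≃ W) (x : V) :
    nbhdPairs (H.comap e.toEmbedding) x = nbhdPairs H (e x) := by
  classical
  unfold nbhdPairs
  apply Finset.card_equiv (Equiv.prodCongr e e)
  rintro ⟨a, b⟩
  simp [SimpleGraph.mem_neighborFinset]

theorem stmt1 (Δ : ℕ) (hΔ : 1 ≤ Δ) (σ : ℝ) (hσ0 : 0 < σ) (hσ1 : σ ≤ 1) :
    ∃ (m : ℕ) (G : SimpleGraph (Fin m)),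
      maxDeg G = Δ ∧
      (∀ v, (nbhdPairs G v : ℝ) ≤ 2 * ((1 - σ) * (Δ.choose 2))) ∧
      (⌊Real.sqrt (1 - σ) * (Δ : ℝ)⌋₊ : ℕ∞) ≤ G.chromaticNumber := by
  classical
  set s := Real.sqrt (1 - σ) with hsdef
  set k := ⌊s * (Δ : ℝ)⌋₊ with hkdef
  set K := max k 1 with hKdef
  have hs0' : (0:ℝ) ≤ 1 - σ := by linarith
  have hsnn : 0 ≤ s := Real.sqrt_nonneg _
  have hss : s * s = 1 - σ := Real.mul_self_sqrt hs0'
  have hsle : s ≤ 1 := by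
    exact (Real.sqrt_le_sqrt (show (1:ℝ) - σ ≤ 1 by linarith)).trans_eq Real.sqrt_one
  have hkreal : (k : ℝ) ≤ s * Δ := Nat.floor_le (by positivity)
  have hkΔ : k ≤ Δ := by
    have h2 : s * Δ ≤ Δ := by nlinarith [Nat.cast_nonneg (α := ℝ) Δ]
    exact_mod_cast hkreal.trans h2
  have hKΔ : K ≤ Δ := max_le hkΔ hΔ
  have hK1 : 1 ≤ K := le_max_right _ _
  set t := Δ - K + 2 with htdef
  have ht : 0 < t := by omega
  set e : Fin (K * t) ≃ Fin K × Fin t := finProdFinEquiv.symm with hedef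
  refine ⟨K * t, (cpG K t ht).comap e.toEmbedding, ?_, ?_, ?_⟩
  · -- max degree = Δ
    unfold maxDeg
    apply le_antisymm
    · apply SimpleGraph.maxDegree_le_of_forall_degree_le
      intro v
      rw [comap_degree]
      by_cases hv : (e v).2 = ⟨0, ht⟩
      · rw [(Prod.ext rfl hv : e v = ((e v).1, ⟨0, ht⟩)), cpG_degree_clique]
        omega
      · rw [cpG_degree_pendant ht _ hv]
        omega
    · have : ((cpG K t ht).comap e.toEmbedding).degree (e.symm (⟨0, hK1⟩, ⟨0, ht⟩)) = Δ := by
        rw [comap_degree, Equiv.apply_symm_apply, cpG_degree_clique]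
        omega
      rw [← this]
      apply SimpleGraph.degree_le_maxDegree
  · -- sparsity
    intro v
    rw [comap_pairs]
    have hb := cpG_pairs ht (e v)
    have hcast : ((nbhdPairs (cpG K t ht) (e v) : ℝ)) ≤ ((K - 1) * (K - 1) : ℕ) := by
      exact_mod_cast hb
    refine hcast.trans ?_
    have hchoose : 2 * ((1 - σ) * (Δ.choose 2 : ℝ)) = (1 - σ) * (Δ * (Δ - 1)) := by
      rw [Nat.cast_choose_two]
      ring
    rw [hchoose]
    have hΔ1 : (1:ℝ) ≤ (Δ:ℝ) := by exact_mod_cast hΔ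
    rcases Nat.eq_zero_or_pos k with hk0 | hkpos
    · have : K = 1 := by omega
      rw [this]
      simp only [Nat.sub_self, Nat.zero_mul, Nat.cast_zero]
      have : (0:ℝ) ≤ (Δ:ℝ) - 1 := by linarith
      positivity
    · have hKk : K = k := by omega
      rw [hKk]
      have hk1 : (1:ℝ) ≤ (k:ℝ) := by exact_mod_cast hkpos
      have hcast2 : (((k - 1) * (k - 1) : ℕ) : ℝ) = ((k:ℝ) - 1) * ((k:ℝ) - 1) := by
        have : ((k - 1 : ℕ) : ℝ) = (k:ℝ) - 1 := by
          rw [Nat.cast_sub hkpos]; simp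
        rw [Nat.cast_mul, this]
      rw [hcast2]
      have h1 : (k:ℝ) - 1 ≤ s * ((Δ:ℝ) - 1) := by nlinarith
      have h2 : (0:ℝ) ≤ (k:ℝ) - 1 := by linarith
      have h3 : ((k:ℝ) - 1) * ((k:ℝ) - 1) ≤ (s * Δ) * (s * ((Δ:ℝ) - 1)) := by
        apply mul_le_mul (by linarith) h1 h2 (by positivity)
      have h4 : s * Δ * (s * ((Δ:ℝ) - 1)) = (1 - σ) * ((Δ:ℝ) * ((Δ:ℝ) - 1)) := by
        rw [← hss]; ring
      linarith
  · -- chromatic number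
    have emb : (⊤ : SimpleGraph (Fin K)) ↪g (cpG K t ht).comap e.toEmbedding :=
      ((SimpleGraph.Iso.comap e (cpG K t ht)).symm.toEmbedding).comp (cpG_top_embedding ht)
    have hmono := SimpleGraph.chromaticNumber_mono_of_hom emb.toHom
    rw [SimpleGraph.chromaticNumber_top] at hmono
    refine le_trans ?_ hmono
    simp only [Fintype.card_fin]
    exact_mod_cast Nat.cast_le.mpr (le_max_left k 1)
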